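/- Let q = 2^m with m a positive integer and let K be a finite field with q^3 elements. Then the set of y ∈ K satisfying y^(q+1) + y^q + 1 = 0 has exactly q + 1 elements, and every such y satisfies y^(1+q+q^2) = 1. -/

import Mathlib

open Polynomial

lemma aux_root_facts {R : Type*} [CommRing R] [CharP R 2] (m q : ℕ) (hq : q = 2 ^ m)
    (r : R) (h : r ^ (q + 1) + r ^ q + 1 = 0) :
    r * r ^ q * r ^ (q ^ 2) = 1 ∧ r ^ (q ^ 3) = r := by
  haveI : Fact (Nat.Prime 2) := ⟨Nat.prime_two⟩
  have h2 : (2 : R) = 0 := by exact_mod_cast CharP.cast_eq_zero R 2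
  have frob : ∀ x y : R, (x + y) ^ q = x ^ q + y ^ q := by
    intro x y; rw [hq]; exact add_pow_char_pow x y 2 m
  have hq2 : ∀ x : R, x ^ q ^ 2 = (x ^ q) ^ q := by
    intro x; rw [sq, pow_mul]
  have hq3 : ∀ x : R, x ^ q ^ 3 = (x ^ q ^ 2) ^ q := by
    intro x; rw [pow_succ q 2, pow_mul]
  have e1 : r ^ q * (r + 1) = 1 := by linear_combination h - h2
  have e2 : r ^ q ^ 2 * (r ^ q + 1) = 1 := by
    have := congrArg (· ^ q) e1
    simp only [mul_pow, one_pow, frob] at this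
    rw [hq2]
    exact this
  have e4 : r * r ^ q * r ^ q ^ 2 = 1 := by
    linear_combination r ^ q ^ 2 * e1 + e2 - (r ^ q * r ^ q ^ 2) * h2
  have e4' : r ^ q * r ^ q ^ 2 * r ^ q ^ 3 = 1 := by
    have := congrArg (· ^ q) e4
    simp only [mul_pow, one_pow] at this
    rw [hq2 r, hq3 r, hq2 r]
    linear_combination this
  exact ⟨e4, by linear_combination r * e4' - r ^ q ^ 3 * e4⟩

theorem stmt_13 (m : ℕ) (hm : 1 ≤ m) (q : ℕ) (hq : q = 2 ^ m)
    (K : Type*) [Field K] [Fintype K] (hK : Fintype.card K = q ^ 3) :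
    {y : K | y ^ (q + 1) + y ^ q + 1 = 0}.ncard = q + 1 ∧
      ∀ y : K, y ^ (q + 1) + y ^ q + 1 = 0 → y ^ (1 + q + q ^ 2) = 1 := by
  -- characteristic 2
  haveI hchar : CharP K 2 := by
    obtain ⟨n, hp, hcard⟩ := FiniteField.card K (ringChar K)
    have h23 : (2 : ℕ) ^ (3 * m) = ringChar K ^ (n : ℕ) := by
      rw [← hcard, hK, hq, ← pow_mul, mul_comm]
    have hdvd : ringChar K ∣ 2 := hp.dvd_of_dvd_pow (n := 3 * m)
      (by rw [h23]; exact dvd_pow_self _ n.ne_zero)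
    have : ringChar K = 2 := (Nat.prime_dvd_prime_iff_eq hp Nat.prime_two).mp hdvd
    exact this ▸ ringChar.charP K
  have hq2 : 2 ≤ q := hq ▸ le_trans (by norm_num) (Nat.pow_le_pow_right (by norm_num) hm)
  have part2 : ∀ y : K, y ^ (q + 1) + y ^ q + 1 = 0 → y ^ (1 + q + q ^ 2) = 1 := by
    intro y hy
    obtain ⟨h1, -⟩ := aux_root_facts m q hq y hy
    rw [pow_add, pow_add, pow_one]
    exact h1
  refine ⟨?_, part2⟩
  -- the polynomial
  set f : K[X] := X ^ (q + 1) + X ^ q + 1 with hf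
  have hfm : f.Monic := by
    have hlt : (X ^ q + 1 : K[X]).degree < (q + 1 : ℕ) := by
      apply lt_of_le_of_lt (degree_add_le _ _)
      simp only [degree_X_pow, degree_one]
      rw [max_lt_iff]
      exact ⟨by exact_mod_cast Nat.lt_succ_self q, by exact_mod_cast Nat.succ_pos q⟩
    have := Polynomial.monic_X_pow_add (n := q + 1) (p := (X ^ q + 1 : K[X])) hlt
    simpa [hf, add_assoc] using this
  have hfdeg : f.natDegree = q + 1 := by
    have h1 : (X ^ q + 1 : K[X]).degree < (X ^ (q + 1) : K[X]).degree := by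
      apply lt_of_le_of_lt (degree_add_le _ _)
      simp only [degree_X_pow, degree_one]
      rw [max_lt_iff]
      constructor <;> exact_mod_cast by simp [Nat.lt_succ_self]
    rw [hf, add_assoc, natDegree_eq_of_degree_eq (degree_add_eq_left_of_degree_lt h1),
      natDegree_X_pow]
  have hf0 : f ≠ 0 := hfm.ne_zero
  -- separability
  have hder : derivative f = X ^ q := by
    have h2K : (2 : K) = 0 := by exact_mod_cast CharP.cast_eq_zero K 2
    have hqK : ((q : ℕ) : K) = 0 := by
      rw [hq]; push_cast; rw [h2K]; exact zero_pow (by omega)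
    simp only [hf, derivative_add, derivative_one, derivative_X_pow, add_zero]
    push_cast [hqK]
    simp
  have hsep : f.Separable := by
    rw [Polynomial.separable_def, hder]
    exact ⟨1, -(X + 1), by rw [hf]; ring⟩
  -- f divides X^(q^3) - X
  have hdvd : f ∣ X ^ (q ^ 3) - X := by
    have hdegf : f.degree ≠ 0 := by
      rw [degree_eq_natDegree hf0, hfdeg]
      exact_mod_cast Nat.succ_ne_zero q
    haveI : Nontrivial (AdjoinRoot f) := AdjoinRoot.nontrivial f hdegf
    haveI : CharP (AdjoinRoot f) 2 :=
      charP_of_injective_ringHom (AdjoinRoot.of f).injective 2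
    set r : AdjoinRoot f := AdjoinRoot.root f with hr
    have hroot : r ^ (q + 1) + r ^ q + 1 = 0 := by
      have := AdjoinRoot.mk_self (f := f)
      rw [hf] at this
      simpa [map_add, map_pow, AdjoinRoot.mk_X, map_one] using this
    obtain ⟨-, hfix⟩ := aux_root_facts m q hq r hroot
    rw [← AdjoinRoot.mk_eq_zero]
    rw [map_sub, map_pow, AdjoinRoot.mk_X]
    rw [sub_eq_zero]
    exact hfix
  -- splits
  have hcard3 : 1 < q ^ 3 := Nat.one_lt_pow (by norm_num) (by omega)
  have hg0 : (X ^ (q ^ 3) - X : K[X]) ≠ 0 :=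
    FiniteField.X_pow_card_sub_X_ne_zero K hcard3
  have hgsplits : Splits (X ^ (q ^ 3) - X : K[X]) := by
    rw [splits_iff_card_roots]
    have hroots : (X ^ (q ^ 3) - X : K[X]).roots = Finset.univ.val := by
      rw [← hK]; exact FiniteField.roots_X_pow_card_sub_X K
    rw [hroots, FiniteField.X_pow_card_sub_X_natDegree_eq K hcard3]
    rw [← hK]; rfl
  have hfsplits : Splits f :=
    hgsplits.of_dvd hg0 hdvd
  -- count roots
  have hfsplits' : Splits (f.map (algebraMap K K)) := by rwa [Algebra.algebraMap_self, Polynomial.map_id]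
  have hcount : Fintype.card (f.rootSet K) = q + 1 := by
    rw [Polynomial.card_rootSet_eq_natDegree hsep hfsplits', hfdeg]
  have hset : {y : K | y ^ (q + 1) + y ^ q + 1 = 0} = f.rootSet K := by
    ext y
    rw [Polynomial.mem_rootSet]
    have hf0' : (X ^ (q + 1) + X ^ q + 1 : K[X]) ≠ 0 := by rw [← hf]; exact hf0
    simp [hf, Set.mem_setOf_eq, hf0, hf0', Polynomial.aeval_def, eval₂_add, eval₂_pow, eval₂_X,
      eval₂_one]
  rw [hset, ← Nat.card_coe_set_eq, Nat.card_eq_fintype_card]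
  exact hcount
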